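/- If f : ℂ → ℂ is entire, not identically zero, and z·f'(z)/f(z) → d as z → ∞ for some nonnegative integer d, then f is a polynomial of degree d; in particular f has exactly d zeros counted with multiplicity. -/

import Mathlib

open Filter Polynomial Function

/-- An entire function that is somewhere nonzero is not eventually zero near any point. -/
lemma aux_not_ev_zero {f : ℂ → ℂ} (hf : Differentiable ℂ f) (hne : ∃ z : ℂ, f z ≠ 0) (a : ℂ) :
    ¬ ∀ᶠ z in nhds a, f z = 0 := by
  intro h
  obtain ⟨w, hw⟩ := hne
  have hA : AnalyticOnNhd ℂ f Set.univ := fun z _ => hf.analyticAt z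
  have hfreq : ∃ᶠ z in nhdsWithin a {a}ᶜ, f z = 0 :=
    ((h.filter_mono nhdsWithin_le_nhds).frequently)
  have := hA.eqOn_zero_of_preconnected_of_frequently_eq_zero isPreconnected_univ
    (Set.mem_univ a) hfreq
  exact hw (this (Set.mem_univ w))

/-- Near a zero `a ≠ 0` of an entire function (not identically zero), the quantity
`z f'(z)/f(z)` blows up. -/
lemma aux_blowup {f : ℂ → ℂ} (hf : Differentiable ℂ f) (hne : ∃ z : ℂ, f z ≠ 0) {a : ℂ}
    (ha : f a = 0) (ha0 : a ≠ 0) (C : ℝ) :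
    ∀ᶠ z in nhdsWithin a {a}ᶜ, f z ≠ 0 ∧ C < ‖z * (deriv f z / f z)‖ := by
  obtain ⟨p, hp⟩ := hf.analyticAt a
  have hpne : p ≠ 0 := fun h0 =>
    aux_not_ev_zero hf hne a (hp.locally_zero_iff.mpr h0)
  set m := p.order with hmdef
  have hm0 : m ≠ 0 := by
    intro h0
    have h1 := p.apply_order_ne_zero hpne
    rw [← hmdef, h0] at h1
    have h2 : p.coeff 0 = f a := hp.coeff_zero 1
    rw [ha] at h2
    exact h1 (FormalMultilinearSeries.coeff_eq_zero.mp h2)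
  set g := (Function.swap dslope a)^[m] f with hgdef
  have hg_fps := hp.has_fpower_series_iterate_dslope_fslope m
  have hg_an : AnalyticAt ℂ g a := ⟨_, hg_fps⟩
  have hga : g a ≠ 0 := hp.iterate_dslope_fslope_ne_zero hpne
  have heq : ∀ᶠ z in nhds a, f z = (z - a) ^ m • g z := Filter.Eventually.of_forall hp.eq_pow_order_mul_iterate_dslope
  -- derivative of g is continuous at a
  have hg_an_on : AnalyticOnNhd ℂ g {y | AnalyticAt ℂ g y} := fun y hy => hy
  have hdg_an : AnalyticAt ℂ (deriv g) a := hg_an_on.deriv a hg_an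
  have hdg_cont : ContinuousAt (deriv g) a := hdg_an.continuousAt
  -- eventually, deriv f has the expected form
  have hderiv : ∀ᶠ z in nhds a,
      deriv f z = (m : ℂ) * (z - a) ^ (m - 1) * g z + (z - a) ^ m * deriv g z := by
    have hev : f =ᶠ[nhds a] fun z => (z - a) ^ m * g z := by
      filter_upwards [heq] with z hz
      simpa [smul_eq_mul] using hz
    have hd := hev.deriv
    filter_upwards [hd, hg_an.eventually_analyticAt] with z hz hgz
    rw [hz]
    have h1 : HasDerivAt (fun w : ℂ => (w - a) ^ m) ((m : ℂ) * (z - a) ^ (m - 1) * 1) z :=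
      ((hasDerivAt_id z).sub_const a).pow m
    have h2 : HasDerivAt g (deriv g z) z := hgz.differentiableAt.hasDerivAt
    have := (h1.mul h2).deriv
    rw [show (fun z => (z - a) ^ m * g z) = (fun w : ℂ => (w - a) ^ m) * g from rfl, this]; ring
  -- the bounded part
  have hB : Tendsto (fun z : ℂ => z * (deriv g z / g z)) (nhds a)
      (nhds (a * (deriv g a / g a))) := by
    exact (continuous_id.continuousAt).mul (hdg_cont.div hg_an.continuousAt hga)
  set b : ℝ := ‖a * (deriv g a / g a)‖
  have hBev : ∀ᶠ z in nhds a, ‖z * (deriv g z / g z)‖ ≤ b + 1 := by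
    have := hB.norm.eventually_le_const (by linarith : b < b + 1)
    exact this
  -- the blow-up part : ‖m * (z / (z-a))‖ → ∞ on the punctured nbhd
  have hT : Tendsto (fun z : ℂ => ‖(m : ℂ) * (z / (z - a))‖) (nhdsWithin a {a}ᶜ) atTop := by
    have h1 : Tendsto (fun z : ℂ => (m : ℝ) * ‖z‖) (nhdsWithin a {a}ᶜ) (nhds ((m : ℝ) * ‖a‖)) :=
      (tendsto_const_nhds.mul (continuous_norm.continuousAt)).mono_left nhdsWithin_le_nhds
    have hpos : 0 < (m : ℝ) * ‖a‖ := by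
      have : 0 < (m : ℝ) := by exact_mod_cast Nat.pos_of_ne_zero hm0
      have : 0 < ‖a‖ := norm_pos_iff.mpr ha0
      positivity
    have h2 : Tendsto (fun z : ℂ => ‖z - a‖) (nhdsWithin a {a}ᶜ) (nhdsWithin 0 (Set.Ioi 0)) := by
      apply tendsto_nhdsWithin_of_tendsto_nhds_of_eventually_within
      · have h0 : Tendsto (fun z : ℂ => ‖z - a‖) (nhds a) (nhds 0) := by
          have hc : Continuous (fun z : ℂ => ‖z - a‖) := by continuity
          simpa using hc.tendsto a
        exact h0.mono_left nhdsWithin_le_nhds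
      · filter_upwards [self_mem_nhdsWithin] with z hz
        simpa [Set.mem_Ioi, sub_ne_zero] using hz
    have h3 : Tendsto (fun z : ℂ => ‖z - a‖⁻¹) (nhdsWithin a {a}ᶜ) atTop :=
      tendsto_inv_nhdsGT_zero.comp h2
    have h4 : Tendsto (fun z : ℂ => (m : ℝ) * ‖z‖ * ‖z - a‖⁻¹) (nhdsWithin a {a}ᶜ) atTop :=
      Tendsto.pos_mul_atTop hpos h1 h3
    refine h4.congr' ?_
    filter_upwards [self_mem_nhdsWithin] with z hz
    have hza : z - a ≠ 0 := sub_ne_zero.mpr hz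
    rw [norm_mul, norm_div]
    rw [Complex.norm_natCast]
    field_simp
  -- continuity of g, nonvanishing near a
  have hgne : ∀ᶠ z in nhds a, g z ≠ 0 := hg_an.continuousAt.eventually_ne hga
  -- put it together
  have hTlarge : ∀ᶠ z in nhdsWithin a {a}ᶜ, C + (b + 1) < ‖(m : ℂ) * (z / (z - a))‖ :=
    hT.eventually_gt_atTop (C + (b + 1))
  filter_upwards [hTlarge, (hderiv.filter_mono nhdsWithin_le_nhds),
    (hgne.filter_mono nhdsWithin_le_nhds), (hBev.filter_mono nhdsWithin_le_nhds),
    (heq.filter_mono nhdsWithin_le_nhds), self_mem_nhdsWithin] with z h1 h2 h3 h4 h5 h6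
  have hza : z - a ≠ 0 := sub_ne_zero.mpr h6
  have hfz : f z ≠ 0 := by
    rw [h5, smul_eq_mul]
    exact mul_ne_zero (pow_ne_zero _ hza) h3
  refine ⟨hfz, ?_⟩
  have key : z * (deriv f z / f z) = (m : ℂ) * (z / (z - a)) + z * (deriv g z / g z) := by
    rw [h2, h5, smul_eq_mul]
    have hpow : (z - a) ^ m = (z - a) ^ (m - 1) * (z - a) := (pow_sub_one_mul hm0 _).symm
    rw [hpow]
    field_simp
  rw [key]
  have := norm_sub_norm_le ((m : ℂ) * (z / (z - a))) (-(z * (deriv g z / g z)))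
  simp only [norm_neg, sub_neg_eq_add] at this
  linarith


/-- The zeros of `f` are bounded. -/
lemma aux_zeros_bounded {f : ℂ → ℂ} (hf : Differentiable ℂ f) (hne : ∃ z : ℂ, f z ≠ 0)
    {c : ℂ} (hlim : Tendsto (fun z : ℂ => z * (deriv f z / f z))
      (cocompact ℂ ⊓ Filter.principal {z : ℂ | f z ≠ 0}) (nhds c)) :
    ∃ r : ℝ, ∀ z, f z = 0 → ‖z‖ ≤ r := by
  have hmem : (fun z : ℂ => z * (deriv f z / f z)) ⁻¹' Metric.ball c 1 ∈
      cocompact ℂ ⊓ Filter.principal {z : ℂ | f z ≠ 0} :=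
    hlim (Metric.ball_mem_nhds c one_pos)
  rw [Filter.mem_inf_principal] at hmem
  rw [Filter.mem_cocompact] at hmem
  obtain ⟨K, hK, hKsub⟩ := hmem
  obtain ⟨r₀, hr₀⟩ := hK.isBounded.subset_closedBall 0
  refine ⟨max r₀ 1, fun a haz => ?_⟩
  by_contra hcon
  push_neg at hcon
  have ha1 : 1 < ‖a‖ := lt_of_le_of_lt (le_max_right r₀ 1) hcon
  have ha0 : a ≠ 0 := by
    intro h; rw [h] at ha1; simp at ha1; linarith
  have haK : a ∉ K := by
    intro hK'
    have := hr₀ hK'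
    simp only [Metric.mem_closedBall, dist_zero_right] at this
    exact absurd (lt_of_le_of_lt (le_max_left r₀ 1) hcon) (not_lt.mpr this)
  have hKc : Kᶜ ∈ nhds a := (hK.isClosed.isOpen_compl).mem_nhds haK
  have hblow := aux_blowup hf hne haz ha0 (‖c‖ + 1)
  have hKc' : ∀ᶠ z in nhdsWithin a {a}ᶜ, z ∈ Kᶜ :=
    eventually_nhdsWithin_of_eventually_nhds hKc
  have hev : ∀ᶠ z in nhdsWithin a {a}ᶜ,
      (f z ≠ 0 ∧ ‖c‖ + 1 < ‖z * (deriv f z / f z)‖) ∧ z ∈ Kᶜ :=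
    hblow.and hKc'
  obtain ⟨z, ⟨hz1, hz2⟩, hz3⟩ := hev.exists
  have hzU := hKsub hz3
  simp only [Set.mem_setOf_eq] at hzU
  have := hzU hz1
  simp only [Set.mem_preimage, Metric.mem_ball] at this
  have hnorm : ‖z * (deriv f z / f z)‖ < ‖c‖ + 1 := by
    calc ‖z * (deriv f z / f z)‖ = ‖(z * (deriv f z / f z) - c) + c‖ := by ring_nf
      _ ≤ ‖z * (deriv f z / f z) - c‖ + ‖c‖ := norm_add_le _ _
      _ < 1 + ‖c‖ := by
          rw [dist_eq_norm] at this; linarith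
      _ = ‖c‖ + 1 := by ring
  linarith

/-- The zero set of `f` is finite. -/
lemma aux_zeros_finite {f : ℂ → ℂ} (hf : Differentiable ℂ f) (hne : ∃ z : ℂ, f z ≠ 0)
    {c : ℂ} (hlim : Tendsto (fun z : ℂ => z * (deriv f z / f z))
      (cocompact ℂ ⊓ Filter.principal {z : ℂ | f z ≠ 0}) (nhds c)) :
    {z : ℂ | f z = 0}.Finite := by
  obtain ⟨r, hr⟩ := aux_zeros_bounded hf hne hlim
  by_contra hinf
  have hinf : {z : ℂ | f z = 0}.Infinite := hinf
  have hsub : {z : ℂ | f z = 0} ⊆ Metric.closedBall 0 r := by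
    intro z hz
    simpa [Metric.mem_closedBall, dist_zero_right] using hr z hz
  obtain ⟨x, -, hx⟩ := hinf.exists_accPt_of_subset_isCompact
    (isCompact_closedBall (0 : ℂ) r) hsub
  rw [accPt_iff_frequently] at hx
  have hfreq : ∃ᶠ z in nhdsWithin x {x}ᶜ, f z = 0 := by
    rw [frequently_nhdsWithin_iff]
    exact hx.mono fun z hz => ⟨hz.2, hz.1⟩
  have hA : AnalyticOnNhd ℂ f Set.univ := fun z _ => hf.analyticAt z
  have := hA.eqOn_zero_of_preconnected_of_frequently_eq_zero isPreconnected_univ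
    (Set.mem_univ x) hfreq
  obtain ⟨w, hw⟩ := hne
  exact hw (this (Set.mem_univ w))

/-- Modding out a point from the principal part doesn't change the filter. -/
lemma aux_filter_diff (s : Set ℂ) (a : ℂ) :
    cocompact ℂ ⊓ Filter.principal (s \ {a}) = cocompact ℂ ⊓ Filter.principal s := by
  have h : ({a}ᶜ : Set ℂ) ∈ cocompact ℂ :=
    Filter.cocompact_le_cofinite (by simp : ({a}ᶜ : Set ℂ) ∈ cofinite)
  have h2 : cocompact ℂ ⊓ Filter.principal {a}ᶜ = cocompact ℂ :=
    inf_eq_left.mpr (le_principal_iff.mpr h)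
  rw [Set.diff_eq, ← inf_principal, inf_comm (Filter.principal s), ← inf_assoc, h2]

/-- NeBot of the limit filter when the zero set is finite. -/
lemma aux_neBot {s : Set ℂ} (hs : sᶜ.Finite) :
    (cocompact ℂ ⊓ Filter.principal s).NeBot := by
  rw [Filter.inf_principal_neBot_iff]
  intro U hU
  rw [Filter.mem_cocompact] at hU
  obtain ⟨K, hK, hKsub⟩ := hU
  have hcomp : IsCompact (K ∪ sᶜ) := hK.union hs.isCompact
  have hne : (K ∪ sᶜ)ᶜ.Nonempty := by
    by_contra hcon
    rw [Set.not_nonempty_iff_eq_empty, Set.compl_empty_iff] at hcon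
    exact IsCompact.ne_univ hcomp hcon
  obtain ⟨z, hz⟩ := hne
  rw [Set.mem_compl_iff, Set.mem_union] at hz
  push_neg at hz
  exact ⟨z, hKsub (Set.mem_compl hz.1), not_not.mp hz.2⟩


lemma aux_main (n : ℕ) : ∀ f : ℂ → ℂ, Differentiable ℂ f → (∃ z : ℂ, f z ≠ 0) → ∀ c : ℂ,
    Tendsto (fun z : ℂ => z * (deriv f z / f z))
      (cocompact ℂ ⊓ Filter.principal {z : ℂ | f z ≠ 0}) (nhds c) →
    ∀ S : Finset ℂ, (∀ z, f z = 0 ↔ z ∈ S) → S.card = n →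
    ∃ P : ℂ[X], (∀ z : ℂ, f z = P.eval z) ∧ P ≠ 0 ∧ (P.natDegree : ℂ) = c := by
  induction n using Nat.strong_induction_on with
  | _ n IH =>
  intro f hf hne c hlim S hS hcard
  rcases Finset.eq_empty_or_nonempty S with hSe | hSne
  · -- base case: no zeros
    have hz : ∀ z, f z ≠ 0 := by
      intro z hz0
      rw [hSe] at hS
      simpa using (hS z).mp hz0
    have huniv : {z : ℂ | f z ≠ 0} = Set.univ := Set.eq_univ_of_forall hz
    rw [huniv, Filter.principal_univ, inf_top_eq] at hlim
    have hAn : AnalyticOnNhd ℂ f Set.univ := fun w _ => hf.analyticAt w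
    have hderiv : Differentiable ℂ (deriv f) := fun z =>
      (hAn.deriv z (Set.mem_univ z)).differentiableAt
    set q : ℂ → ℂ := fun z => deriv f z / f z with hq
    have hq_diff : Differentiable ℂ q := hderiv.div hf hz
    have hinv : Tendsto (fun z : ℂ => z⁻¹) (cocompact ℂ) (nhds 0) := by
      rw [← Metric.cobounded_eq_cocompact]
      exact tendsto_inv₀_cobounded
    have h0ne : ∀ᶠ z : ℂ in cocompact ℂ, z ≠ 0 := by
      have : ({(0:ℂ)}ᶜ : Set ℂ) ∈ cocompact ℂ :=
        Filter.cocompact_le_cofinite (by simp : ({(0:ℂ)}ᶜ : Set ℂ) ∈ cofinite)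
      exact this
    have hq0 : Tendsto q (cocompact ℂ) (nhds 0) := by
      have hmul : Tendsto (fun z : ℂ => z * q z * z⁻¹) (cocompact ℂ) (nhds (c * 0)) :=
        hlim.mul hinv
      rw [mul_zero] at hmul
      exact hmul.congr' (h0ne.mono fun z hz0 => by
        rw [mul_comm z (q z), mul_assoc, mul_inv_cancel₀ hz0, mul_one])
    have hqz : q = Function.const ℂ 0 := hq_diff.eq_const_of_tendsto_cocompact hq0
    have hder0 : ∀ z, deriv f z = 0 := by
      intro z
      have h1 := congrFun hqz z
      simp only [Function.const_apply, hq] at h1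
      exact (div_eq_zero_iff.mp h1).resolve_right (hz z)
    have hconst := is_const_of_deriv_eq_zero hf hder0
    refine ⟨Polynomial.C (f 0), fun z => by simp [hconst z 0], ?_, ?_⟩
    · exact Polynomial.C_ne_zero.mpr (hz 0)
    · have h0c : Tendsto (fun z : ℂ => z * q z) (cocompact ℂ) (nhds 0) := by
        have he : (fun z : ℂ => z * q z) = fun _ => 0 := by
          funext z; simp [hq, hder0 z]
        rw [he]; exact tendsto_const_nhds
      have hc0 := tendsto_nhds_unique hlim h0c
      simp [Polynomial.natDegree_C, hc0]
  · -- inductive step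
    obtain ⟨a, haS⟩ := hSne
    have ha : f a = 0 := (hS a).mpr haS
    obtain ⟨p, hp⟩ := hf.analyticAt a
    have hpne : p ≠ 0 := fun h0 => aux_not_ev_zero hf hne a (hp.locally_zero_iff.mpr h0)
    have hm0 : p.order ≠ 0 := by
      intro h0
      have h1 := p.apply_order_ne_zero hpne
      rw [h0] at h1
      have h2 : p.coeff 0 = f a := hp.coeff_zero 1
      rw [ha] at h2
      exact h1 (FormalMultilinearSeries.coeff_eq_zero.mp h2)
    set m := p.order with hmdef
    set g := (Function.swap dslope a)^[m] f with hgdef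
    have hga : g a ≠ 0 := hp.iterate_dslope_fslope_ne_zero hpne
    have hg_diff : Differentiable ℂ g := by
      have hiter : ∀ k : ℕ, Differentiable ℂ ((Function.swap dslope a)^[k] f) := by
        intro k
        induction k with
        | zero => simpa using hf
        | succ k ih =>
          intro z
          rcases eq_or_ne z a with rfl | hza
          · exact (hp.has_fpower_series_iterate_dslope_fslope
              (k + 1)).analyticAt.differentiableAt
          · rw [Function.iterate_succ_apply']
            exact (differentiableAt_dslope_of_ne hza).mpr (ih z)
      exact hiter m
    have hZa : ∀ k : ℕ, k < m → ((Function.swap dslope a)^[k] f) a = 0 := by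
      intro k hk
      have h1 : (FormalMultilinearSeries.fslope^[k] p).coeff 0
          = ((Function.swap dslope a)^[k] f) a :=
        (hp.has_fpower_series_iterate_dslope_fslope k).coeff_zero 1
      rw [FormalMultilinearSeries.coeff_iterate_fslope] at h1
      rw [← h1]
      exact FormalMultilinearSeries.coeff_eq_zero.mpr
        (p.apply_eq_zero_of_lt_order (by simpa using hk))
    have hfg : ∀ z : ℂ, f z = (z - a) ^ m * g z := by
      have key : ∀ k : ℕ, k ≤ m → ∀ z : ℂ, z ≠ a →
          f z = (z - a) ^ k * ((Function.swap dslope a)^[k] f z) := by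
        intro k
        induction k with
        | zero => intro _ z _; simp
        | succ k ih =>
          intro hk z hz
          have hk' : k ≤ m := Nat.le_of_succ_le hk
          have h1 := ih hk' z hz
          have h2 : (Function.swap dslope a)^[k + 1] f z
              = ((Function.swap dslope a)^[k] f z) / (z - a) := by
            rw [Function.iterate_succ_apply']
            show dslope ((Function.swap dslope a)^[k] f) a z = _
            rw [dslope_of_ne _ hz, slope_def_field, hZa k (Nat.lt_of_succ_le hk)]
            rw [sub_zero]
          rw [h2, h1]
          have hza : z - a ≠ 0 := sub_ne_zero.mpr hz
          field_simp
          ring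
      intro z
      rcases eq_or_ne z a with rfl | hz
      · rw [ha, sub_self, zero_pow hm0, zero_mul]
      · exact key m le_rfl z hz
    have hgz_iff : ∀ z : ℂ, g z = 0 ↔ z ∈ S.erase a := by
      intro z
      constructor
      · intro hz0
        have hza : z ≠ a := fun h => hga (h ▸ hz0)
        refine Finset.mem_erase.mpr ⟨hza, (hS z).mp ?_⟩
        rw [hfg z, hz0, mul_zero]
      · intro hz
        obtain ⟨hza, hzS⟩ := Finset.mem_erase.mp hz
        have hfz : f z = 0 := (hS z).mpr hzS
        rw [hfg z] at hfz
        exact (mul_eq_zero.mp hfz).resolve_left (pow_ne_zero _ (sub_ne_zero.mpr hza))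
    have hderiv_f : ∀ z : ℂ,
        deriv f z = (m : ℂ) * (z - a) ^ (m - 1) * g z + (z - a) ^ m * deriv g z := by
      intro z
      have hF : f = fun w => (w - a) ^ m * g w := funext hfg
      rw [hF]
      have h1 : HasDerivAt (fun w : ℂ => (w - a) ^ m) ((m : ℂ) * (z - a) ^ (m - 1) * 1) z :=
        ((hasDerivAt_id z).sub_const a).pow m
      have h2 : HasDerivAt g (deriv g z) z := (hg_diff z).hasDerivAt
      rw [show (fun w => (w - a) ^ m * g w) = (fun w : ℂ => (w - a) ^ m) * g from rfl,
        (h1.mul h2).deriv]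
      ring
    -- limit for g
    have hane : ∀ᶠ z : ℂ in cocompact ℂ, z ≠ a := by
      have : ({a}ᶜ : Set ℂ) ∈ cocompact ℂ :=
        Filter.cocompact_le_cofinite (by simp : ({a}ᶜ : Set ℂ) ∈ cofinite)
      exact this
    have hT1 : Tendsto (fun z : ℂ => z / (z - a)) (cocompact ℂ) (nhds 1) := by
      have hsub : Tendsto (fun z : ℂ => z - a) (cocompact ℂ) (cocompact ℂ) := by
        have := (Homeomorph.subRight a).map_cocompact (X := ℂ)
        exact this.le
      have hinv : Tendsto (fun z : ℂ => (z - a)⁻¹) (cocompact ℂ) (nhds 0) := by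
        have h2 : Tendsto (fun z : ℂ => z⁻¹) (cocompact ℂ) (nhds 0) := by
          rw [← Metric.cobounded_eq_cocompact]
          exact tendsto_inv₀_cobounded
        exact h2.comp hsub
      have h3 : Tendsto (fun z : ℂ => 1 + a * (z - a)⁻¹) (cocompact ℂ) (nhds (1 + a * 0)) :=
        tendsto_const_nhds.add (tendsto_const_nhds.mul hinv)
      rw [mul_zero, add_zero] at h3
      refine h3.congr' ?_
      filter_upwards [hane] with z hz
      have hza : z - a ≠ 0 := sub_ne_zero.mpr hz
      field_simp
      ring
    have hglim : Tendsto (fun z : ℂ => z * (deriv g z / g z))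
        (cocompact ℂ ⊓ Filter.principal {z : ℂ | g z ≠ 0}) (nhds (c - m)) := by
      have hzne : {z : ℂ | f z ≠ 0} = {z : ℂ | g z ≠ 0} \ {a} := by
        ext z
        simp only [Set.mem_setOf_eq, Set.mem_diff, Set.mem_singleton_iff]
        constructor
        · intro hfz
          have hza : z ≠ a := fun h => hfz (h ▸ ha)
          exact ⟨fun hg0 => hfz (by rw [hfg z, hg0, mul_zero]), hza⟩
        · rintro ⟨hg0, hza⟩
          rw [hfg z]
          exact mul_ne_zero (pow_ne_zero _ (sub_ne_zero.mpr hza)) hg0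
      have hfeq : cocompact ℂ ⊓ Filter.principal {z : ℂ | f z ≠ 0}
          = cocompact ℂ ⊓ Filter.principal {z : ℂ | g z ≠ 0} := by
        rw [hzne, aux_filter_diff]
      have hstep : Tendsto (fun z : ℂ => z * (deriv f z / f z) - (m : ℂ) * (z / (z - a)))
          (cocompact ℂ ⊓ Filter.principal {z : ℂ | f z ≠ 0}) (nhds (c - (m : ℂ) * 1)) :=
        hlim.sub ((tendsto_const_nhds.mul hT1).mono_left inf_le_left)
      rw [mul_one] at hstep
      rw [← hfeq]
      refine hstep.congr' ?_
      rw [Filter.eventuallyEq_inf_principal_iff]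
      filter_upwards [hane] with z hzA hzf
      try simp only [Set.mem_setOf_eq] at hzf
      have hza : z - a ≠ 0 := sub_ne_zero.mpr hzA
      have hgz : g z ≠ 0 := by
        intro h0
        exact hzf (by rw [hfg z, h0, mul_zero])
      have hpow : (z - a) ^ m = (z - a) ^ (m - 1) * (z - a) := (pow_sub_one_mul hm0 _).symm
      have hkey : deriv f z / f z = (m : ℂ) / (z - a) + deriv g z / g z := by
        rw [hderiv_f z, hfg z, hpow]
        field_simp [pow_ne_zero (m - 1) hza, hza, hgz]
      rw [hkey]
      ring
    -- apply the induction hypothesis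
    have hcard' : (S.erase a).card < n := by
      rw [← hcard]
      exact Finset.card_erase_lt_of_mem haS
    obtain ⟨Q, hQeval, hQ0, hQdeg⟩ := IH (S.erase a).card hcard' g hg_diff ⟨a, hga⟩
      (c - m) hglim (S.erase a) hgz_iff rfl
    refine ⟨(Polynomial.X - Polynomial.C a) ^ m * Q, ?_, ?_, ?_⟩
    · intro z
      rw [hfg z, hQeval z]
      simp [Polynomial.eval_mul, Polynomial.eval_pow]
    · exact mul_ne_zero (pow_ne_zero _ (Polynomial.X_sub_C_ne_zero a)) hQ0
    · rw [Polynomial.natDegree_mul (pow_ne_zero _ (Polynomial.X_sub_C_ne_zero a)) hQ0,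
        Polynomial.natDegree_pow, Polynomial.natDegree_X_sub_C]
      push_cast
      rw [hQdeg]
      ring

/-- If `f` is entire, not identically zero, and `z f'(z)/f(z) → d` as `z → ∞` (over `z`
with `f z ≠ 0`) for a nonnegative integer `d`, then `f` is a polynomial of degree `d`;
in particular `f` has exactly `d` zeros counted with multiplicity. -/
theorem stmt_13 (f : ℂ → ℂ) (hf : Differentiable ℂ f) (hne : ∃ z : ℂ, f z ≠ 0)
    (d : ℕ)
    (hlim : Tendsto (fun z : ℂ => z * (deriv f z / f z))
      (cocompact ℂ ⊓ Filter.principal {z : ℂ | f z ≠ 0}) (nhds (d : ℂ))) :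
    ∃ P : ℂ[X], (∀ z : ℂ, f z = P.eval z) ∧ P.natDegree = d ∧
      Multiset.card P.roots = d := by
  have hfin : {z : ℂ | f z = 0}.Finite := aux_zeros_finite hf hne hlim
  set S := hfin.toFinset with hSdef
  have hS : ∀ z, f z = 0 ↔ z ∈ S := by
    intro z
    rw [hSdef, Set.Finite.mem_toFinset]
    rfl
  obtain ⟨P, hPeval, hP0, hPdeg⟩ := aux_main S.card f hf hne (d : ℂ) hlim S hS rfl
  have hdeg : P.natDegree = d := by exact_mod_cast hPdeg
  refine ⟨P, hPeval, hdeg, ?_⟩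
  have hsplit := Polynomial.splits_iff_card_roots.mp
    (IsAlgClosed.splits (k := ℂ) P)
  rw [hsplit, hdeg]
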